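/- Let Θ̂_λ be defined as a minimizer over all n×n matrices Θ of ‖A − Θ‖₂² + λ²·rank(Θ), and let E = A − Θ₀ with ‖E‖_{2→2} ≤ λ/2. Then ‖Θ̂_λ − Θ₀‖₂² ≤ 4λ²·rank(Θ₀), where ‖·‖₂ is the Frobenius norm. -/

import Mathlib

noncomputable def specNorm {n : ℕ} (B : Matrix (Fin n) (Fin n) ℝ) : ℝ :=
  sSup {r : ℝ | ∃ x : Fin n → ℝ, (∑ i, (x i) ^ 2) ≤ 1 ∧
    r = Real.sqrt (∑ i, (B.mulVec x i) ^ 2)}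

noncomputable def frobSq {n : ℕ} (B : Matrix (Fin n) (Fin n) ℝ) : ℝ :=
  ∑ i, ∑ j, (B i j) ^ 2

lemma specSet_bdd {n : ℕ} (B : Matrix (Fin n) (Fin n) ℝ) :
    BddAbove {r : ℝ | ∃ x : Fin n → ℝ, (∑ i, (x i) ^ 2) ≤ 1 ∧
      r = Real.sqrt (∑ i, (B.mulVec x i) ^ 2)} := by
  refine ⟨Real.sqrt (frobSq B), ?_⟩
  rintro r ⟨x, hx, rfl⟩
  apply Real.sqrt_le_sqrt
  have : ∀ i, (B.mulVec x i) ^ 2 ≤ ∑ j, (B i j)^2 := by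
    intro i
    calc (B.mulVec x i)^2 = (∑ j, B i j * x j)^2 := by rw [Matrix.mulVec, dotProduct]
    _ ≤ (∑ j, (B i j)^2) * ∑ j, (x j)^2 := Finset.sum_mul_sq_le_sq_mul_sq _ _ _
    _ ≤ (∑ j, (B i j)^2) * 1 := by
        apply mul_le_mul_of_nonneg_left hx (Finset.sum_nonneg fun _ _ => sq_nonneg _)
    _ = _ := mul_one _
  exact Finset.sum_le_sum fun i _ => this i

lemma specNorm_nonneg {n : ℕ} (B : Matrix (Fin n) (Fin n) ℝ) : 0 ≤ specNorm B := by
  have h0 : (0:ℝ) ∈ {r : ℝ | ∃ x : Fin n → ℝ, (∑ i, (x i) ^ 2) ≤ 1 ∧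
      r = Real.sqrt (∑ i, (B.mulVec x i) ^ 2)} := by
    refine ⟨0, by simp, ?_⟩
    simp [Matrix.mulVec_zero]
  exact le_csSup (specSet_bdd B) h0

lemma sqrt_sum_mulVec_le {n : ℕ} (B : Matrix (Fin n) (Fin n) ℝ) (v : Fin n → ℝ) :
    Real.sqrt (∑ i, (B.mulVec v i) ^ 2) ≤ specNorm B * Real.sqrt (∑ i, (v i)^2) := by
  rcases eq_or_ne (∑ i, (v i)^2) 0 with h | h
  · have hv : v = 0 := by
      funext i
      have := (Finset.sum_eq_zero_iff_of_nonneg (fun j _ => sq_nonneg (v j))).1 h i (Finset.mem_univ i)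
      exact pow_eq_zero_iff (n := 2) (by norm_num) |>.1 this
    simp [hv, Matrix.mulVec_zero]
  · have hpos : 0 < ∑ i, (v i)^2 :=
      lt_of_le_of_ne (Finset.sum_nonneg fun _ _ => sq_nonneg _) (Ne.symm h)
    set c : ℝ := Real.sqrt (∑ i, (v i)^2) with hc
    have hcpos : 0 < c := Real.sqrt_pos.2 hpos
    set x : Fin n → ℝ := c⁻¹ • v with hx
    have hxsum : (∑ i, (x i)^2) = 1 := by
      simp only [hx, Pi.smul_apply, smul_eq_mul, mul_pow, ← Finset.mul_sum]
      have : c^2 = ∑ i, (v i)^2 := Real.sq_sqrt hpos.le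
      field_simp [this]
      linarith
    have hmem : Real.sqrt (∑ i, (B.mulVec x i) ^ 2) ≤ specNorm B :=
      le_csSup (specSet_bdd B) ⟨x, hxsum.le, rfl⟩
    have hBx : B.mulVec x = c⁻¹ • B.mulVec v := by
      rw [hx, Matrix.mulVec_smul]
    have : Real.sqrt (∑ i, (B.mulVec x i)^2) = c⁻¹ * Real.sqrt (∑ i, (B.mulVec v i)^2) := by
      rw [hBx]
      simp only [Pi.smul_apply, smul_eq_mul, mul_pow, ← Finset.mul_sum]
      rw [Real.sqrt_mul (by positivity), Real.sqrt_sq_eq_abs, abs_of_pos (by positivity)]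
    rw [this] at hmem
    calc Real.sqrt (∑ i, (B.mulVec v i) ^ 2)
        = c * (c⁻¹ * Real.sqrt (∑ i, (B.mulVec v i)^2)) := by field_simp
      _ ≤ c * specNorm B := by
          exact mul_le_mul_of_nonneg_left hmem hcpos.le
      _ = specNorm B * c := mul_comm _ _

open Module

-- inner product of Euclidean space as sum
lemma euc_inner_eq {n : ℕ} (x y : EuclideanSpace ℝ (Fin n)) :
    (inner ℝ x y : ℝ) = ∑ i, x i * y i := by
  simp [PiLp.inner_apply, RCLike.inner_apply, mul_comm]

lemma euc_normsq_eq {n : ℕ} (x : EuclideanSpace ℝ (Fin n)) :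
    ‖x‖^2 = ∑ i, (x i)^2 := by
  rw [← real_inner_self_eq_norm_sq, euc_inner_eq]
  simp [sq]

lemma trace_duality {n : ℕ} (E M : Matrix (Fin n) (Fin n) ℝ) :
    |∑ i, ∑ j, E i j * M i j| ≤
      specNorm E * Real.sqrt (M.rank : ℝ) * Real.sqrt (frobSq M) := by
  classical
  set e : (Fin n → ℝ) ≃ₗ[ℝ] EuclideanSpace ℝ (Fin n) :=
    (WithLp.linearEquiv 2 ℝ (Fin n → ℝ)).symm with he
  set V : Submodule ℝ (Fin n → ℝ) := LinearMap.range M.mulVecLin with hV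
  set V' : Submodule ℝ (EuclideanSpace ℝ (Fin n)) := V.map (e : (Fin n → ℝ) →ₗ[ℝ] EuclideanSpace ℝ (Fin n)) with hV'
  have hr : finrank ℝ V' = M.rank := by
    rw [hV', LinearEquiv.finrank_map_eq e V, hV, Matrix.rank]
  set r := finrank ℝ V' with hrdef
  let b : OrthonormalBasis (Fin r) ℝ V' := stdOrthonormalBasis ℝ V'
  -- columns of M
  set col : Fin n → EuclideanSpace ℝ (Fin n) := fun j => e (fun i => M i j) with hcol
  have hcol_mem : ∀ j, col j ∈ V' := by
    intro j
    refine ⟨fun i => M i j, ⟨Pi.single j 1, ?_⟩, rfl⟩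
    ext i
    simp [Matrix.mulVecLin, Matrix.mulVec_single]
  have hcol_apply : ∀ j i, col j i = M i j := fun j i => rfl
  set u : Fin r → EuclideanSpace ℝ (Fin n) := fun k => (b k : EuclideanSpace ℝ (Fin n)) with hu
  set c : Fin r → Fin n → ℝ := fun k j => (inner ℝ (u k) (col j) : ℝ) with hc
  -- expansion of columns
  have hexp : ∀ j i, M i j = ∑ k, c k j * u k i := by
    intro j i
    have h1 : ∑ k, (b.repr ⟨col j, hcol_mem j⟩ k) • (b k) = (⟨col j, hcol_mem j⟩ : V') :=
      b.sum_repr _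
    have h2 : ∀ k, b.repr ⟨col j, hcol_mem j⟩ k = c k j := by
      intro k
      rw [b.repr_apply_apply, Submodule.coe_inner]
    have h3 : (∑ k, (c k j) • (b k) : V') = (⟨col j, hcol_mem j⟩ : V') := by
      rw [← h1]; exact Finset.sum_congr rfl fun k _ => by rw [h2]
    have h4 : (∑ k, (c k j) • (u k) : EuclideanSpace ℝ (Fin n)) = col j := by
      have := congrArg (Subtype.val) h3
      simpa [hu] using this
    have h5 := congrArg (fun x : EuclideanSpace ℝ (Fin n) =>
      (inner ℝ (EuclideanSpace.single i (1:ℝ)) x : ℝ)) h4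
    simp only [inner_sum, inner_smul_right, EuclideanSpace.inner_single_left,
      starRingEnd_apply, star_one, one_mul] at h5
    exact h5.symm
  -- rewrite total sum
  have hsum : ∑ i, ∑ j, E i j * M i j = ∑ k, ∑ i, u k i * E.mulVec (c k) i := by
    have : ∀ i j, E i j * M i j = ∑ k, E i j * (c k j * u k i) := by
      intro i j; rw [hexp j i, Finset.mul_sum]
    calc ∑ i, ∑ j, E i j * M i j
        = ∑ i, ∑ j, ∑ k, E i j * (c k j * u k i) :=
          Finset.sum_congr rfl fun i _ => Finset.sum_congr rfl fun j _ => this i j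
      _ = ∑ i, ∑ k, ∑ j, E i j * (c k j * u k i) :=
          Finset.sum_congr rfl fun i _ => Finset.sum_comm
      _ = ∑ k, ∑ i, ∑ j, E i j * (c k j * u k i) := Finset.sum_comm
      _ = ∑ k, ∑ i, u k i * E.mulVec (c k) i := by
          refine Finset.sum_congr rfl fun k _ => Finset.sum_congr rfl fun i _ => ?_
          simp only [Matrix.mulVec, dotProduct, Finset.mul_sum]
          exact Finset.sum_congr rfl fun j _ => by ring
  -- norm of basis vectors
  have hnormu : ∀ k, (∑ i, (u k i)^2) = 1 := by
    intro k
    have h1 : ‖b k‖ = 1 := b.orthonormal.1 k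
    have h2 : ‖u k‖ = 1 := h1
    rw [← euc_normsq_eq, h2, one_pow]
  -- per-k bound
  have hb : ∀ k, |∑ i, u k i * E.mulVec (c k) i| ≤
      specNorm E * Real.sqrt (∑ j, (c k j)^2) := by
    intro k
    have h1 : (∑ i, u k i * E.mulVec (c k) i)^2 ≤
        (∑ i, (u k i)^2) * ∑ i, (E.mulVec (c k) i)^2 :=
      Finset.sum_mul_sq_le_sq_mul_sq _ _ _
    rw [hnormu k, one_mul] at h1
    calc |∑ i, u k i * E.mulVec (c k) i|
        = Real.sqrt ((∑ i, u k i * E.mulVec (c k) i)^2) := (Real.sqrt_sq_eq_abs _).symm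
      _ ≤ Real.sqrt (∑ i, (E.mulVec (c k) i)^2) := Real.sqrt_le_sqrt h1
      _ ≤ specNorm E * Real.sqrt (∑ j, (c k j)^2) := sqrt_sum_mulVec_le E (c k)
  -- Parseval
  have hpars : ∀ j, (∑ k, (c k j)^2) = ∑ i, (M i j)^2 := by
    intro j
    have h1 := b.sum_inner_mul_inner (⟨col j, hcol_mem j⟩ : V') (⟨col j, hcol_mem j⟩ : V')
    have h2 : ∀ k, (inner ℝ (⟨col j, hcol_mem j⟩ : V') (b k) : ℝ) = c k j := by
      intro k
      rw [real_inner_comm, Submodule.coe_inner]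
    have h3 : ∀ k, (inner ℝ (b k) (⟨col j, hcol_mem j⟩ : V') : ℝ) = c k j := by
      intro k
      rw [Submodule.coe_inner]
    have h4 : (inner ℝ (⟨col j, hcol_mem j⟩ : V') (⟨col j, hcol_mem j⟩ : V') : ℝ)
        = ∑ i, (M i j)^2 := by
      rw [Submodule.coe_inner, real_inner_self_eq_norm_sq, euc_normsq_eq]
      exact Finset.sum_congr rfl fun i _ => rfl
    rw [← h4, ← h1]
    exact Finset.sum_congr rfl fun k _ => by rw [h2, h3, sq]
  -- sum over k of sqrt bound: Cauchy-Schwarz with ones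
  have htot : ∑ k, Real.sqrt (∑ j, (c k j)^2) ≤
      Real.sqrt (r : ℝ) * Real.sqrt (frobSq M) := by
    have h1 : (∑ k, Real.sqrt (∑ j, (c k j)^2))^2 ≤
        (∑ _k : Fin r, (1:ℝ)^2) * ∑ k, (Real.sqrt (∑ j, (c k j)^2))^2 := by
      have := Finset.sum_mul_sq_le_sq_mul_sq Finset.univ
        (fun _ : Fin r => (1:ℝ)) (fun k => Real.sqrt (∑ j, (c k j)^2))
      simpa using this
    have h2 : ∑ k, (Real.sqrt (∑ j, (c k j)^2))^2 = frobSq M := by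
      calc ∑ k, (Real.sqrt (∑ j, (c k j)^2))^2
          = ∑ k, ∑ j, (c k j)^2 := Finset.sum_congr rfl fun k _ =>
            Real.sq_sqrt (Finset.sum_nonneg fun _ _ => sq_nonneg _)
        _ = ∑ j, ∑ k, (c k j)^2 := Finset.sum_comm
        _ = ∑ j, ∑ i, (M i j)^2 := Finset.sum_congr rfl fun j _ => hpars j
        _ = ∑ i, ∑ j, (M i j)^2 := Finset.sum_comm
        _ = frobSq M := rfl
    have h3 : (∑ _k : Fin r, (1:ℝ)^2) = (r : ℝ) := by simp
    rw [h2, h3] at h1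
    calc ∑ k, Real.sqrt (∑ j, (c k j)^2)
        = Real.sqrt ((∑ k, Real.sqrt (∑ j, (c k j)^2))^2) := by
          rw [Real.sqrt_sq (Finset.sum_nonneg fun _ _ => Real.sqrt_nonneg _)]
      _ ≤ Real.sqrt ((r : ℝ) * frobSq M) := Real.sqrt_le_sqrt h1
      _ = Real.sqrt (r : ℝ) * Real.sqrt (frobSq M) := Real.sqrt_mul (by positivity) _
  calc |∑ i, ∑ j, E i j * M i j|
      = |∑ k, ∑ i, u k i * E.mulVec (c k) i| := by rw [hsum]
    _ ≤ ∑ k, |∑ i, u k i * E.mulVec (c k) i| := Finset.abs_sum_le_sum_abs _ _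
    _ ≤ ∑ k, specNorm E * Real.sqrt (∑ j, (c k j)^2) :=
        Finset.sum_le_sum fun k _ => hb k
    _ = specNorm E * ∑ k, Real.sqrt (∑ j, (c k j)^2) := by rw [Finset.mul_sum]
    _ ≤ specNorm E * (Real.sqrt (r : ℝ) * Real.sqrt (frobSq M)) := by
        exact mul_le_mul_of_nonneg_left htot (specNorm_nonneg E)
    _ = specNorm E * Real.sqrt ((M.rank : ℝ)) * Real.sqrt (frobSq M) := by
        rw [hr]; ring


lemma matrix_rank_sub_le {n : ℕ} (X Y : Matrix (Fin n) (Fin n) ℝ) :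
    (X - Y).rank ≤ X.rank + Y.rank := by
  have hle : LinearMap.range (X - Y).mulVecLin ≤
      LinearMap.range X.mulVecLin ⊔ LinearMap.range Y.mulVecLin := by
    rintro x ⟨v, rfl⟩
    have h : (X - Y).mulVecLin v = X.mulVecLin v - Y.mulVecLin v := by
      simp [Matrix.mulVecLin_apply, Matrix.sub_mulVec]
    rw [h]
    exact Submodule.sub_mem _ (Submodule.mem_sup_left ⟨v, rfl⟩)
      (Submodule.mem_sup_right ⟨v, rfl⟩)
  calc (X - Y).rank ≤ finrank ℝ
        (LinearMap.range X.mulVecLin ⊔ LinearMap.range Y.mulVecLin : Submodule ℝ (Fin n → ℝ)) :=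
        Submodule.finrank_mono hle
    _ ≤ X.rank + Y.rank := Submodule.finrank_add_le_finrank_add_finrank _ _

lemma frobSq_nonneg {n : ℕ} (B : Matrix (Fin n) (Fin n) ℝ) : 0 ≤ frobSq B :=
  Finset.sum_nonneg fun _ _ => Finset.sum_nonneg fun _ _ => sq_nonneg _

/-- If `Θ̂` minimizes `‖A − Θ‖₂² + λ²·rank Θ` and `‖A − Θ₀‖_{2→2} ≤ λ/2`, then
`‖Θ̂ − Θ₀‖₂² ≤ 4λ²·rank Θ₀`. -/
theorem rank_penalized_estimator {n : ℕ}
    (A Θ₀ Θhat : Matrix (Fin n) (Fin n) ℝ) (lam : ℝ) (hlam : 0 ≤ lam)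
    (hmin : ∀ Θ : Matrix (Fin n) (Fin n) ℝ,
      frobSq (A - Θhat) + lam ^ 2 * (Θhat.rank : ℝ) ≤
        frobSq (A - Θ) + lam ^ 2 * (Θ.rank : ℝ))
    (hnoise : specNorm (A - Θ₀) ≤ lam / 2) :
    frobSq (Θhat - Θ₀) ≤ 4 * lam ^ 2 * (Θ₀.rank : ℝ) := by
  set E := A - Θ₀ with hE
  set Δ := Θhat - Θ₀ with hΔ
  set t := ∑ i, ∑ j, E i j * Δ i j with ht
  have key := hmin Θ₀
  have hexpand : frobSq (A - Θhat) = frobSq E - 2*t + frobSq Δ := by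
    have h1 : ∀ i j, (A - Θhat) i j = E i j - Δ i j := by
      intro i j; simp only [hE, hΔ, Matrix.sub_apply]; ring
    have h2 : ∑ i, ∑ j, ((A - Θhat) i j)^2
        = ∑ i, ∑ j, ((E i j)^2 - 2*(E i j * Δ i j) + (Δ i j)^2) := by
      refine Finset.sum_congr rfl fun i _ => Finset.sum_congr rfl fun j _ => ?_
      rw [h1 i j]; ring
    simp only [frobSq]
    rw [h2]
    simp only [Finset.sum_add_distrib, Finset.sum_sub_distrib, ← Finset.mul_sum]
    rw [ht]
  have hbase : frobSq Δ ≤ 2*t + lam^2 * ((Θ₀.rank : ℝ) - (Θhat.rank : ℝ)) := by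
    rw [hexpand] at key; linarith
  have htd := trace_duality E Δ
  have hrank : ((Δ.rank : ℝ)) ≤ ((Θhat.rank : ℝ) + (Θ₀.rank : ℝ)) := by
    have := matrix_rank_sub_le Θhat Θ₀
    rw [← hΔ] at this
    exact_mod_cast this
  set R : ℝ := (Θhat.rank : ℝ) + (Θ₀.rank : ℝ) with hR
  have hRnn : 0 ≤ R := by positivity
  have hsqrtrank : Real.sqrt ((Δ.rank : ℝ)) ≤ Real.sqrt R := Real.sqrt_le_sqrt hrank
  have hD : 0 ≤ frobSq Δ := frobSq_nonneg Δ
  have ht1 : t ≤ (lam/2) * Real.sqrt R * Real.sqrt (frobSq Δ) := by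
    have h1 : t ≤ |t| := le_abs_self t
    have h2 : specNorm E * Real.sqrt ((Δ.rank : ℝ)) * Real.sqrt (frobSq Δ) ≤
        (lam/2) * Real.sqrt R * Real.sqrt (frobSq Δ) := by
      have hs0 := specNorm_nonneg E
      have := mul_le_mul hnoise hsqrtrank (Real.sqrt_nonneg _) (by linarith)
      exact mul_le_mul_of_nonneg_right this (Real.sqrt_nonneg _)
    exact h1.trans (htd.trans h2)
  have hsqD : (Real.sqrt (frobSq Δ))^2 = frobSq Δ := Real.sq_sqrt hD
  have hsqR : (Real.sqrt R)^2 = R := Real.sq_sqrt hRnn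
  have hhat : (0:ℝ) ≤ lam^2 * (Θhat.rank : ℝ) := by positivity
  have hzero : (0:ℝ) ≤ lam^2 * (Θ₀.rank : ℝ) := by positivity
  nlinarith [sq_nonneg (Real.sqrt (frobSq Δ) - lam * Real.sqrt R),
    Real.sqrt_nonneg (frobSq Δ), Real.sqrt_nonneg R]
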